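/- Let G be a local groupoid in which every arrow is inversional, i.e. can be written as a well-defined product of invertible elements (elements g admitting g^{-1} with g g^{-1} = u(t(g)) and g^{-1} g = u(s(g))). Then the associative completion AC(G) := (well-formed words)/~, with multiplication given by concatenation, source and target s([w_1,...,w_n]) = s(w_n), t([w_1,...,w_n]) = t(w_1), and units [u(x)], is a groupoid: every element of AC(G) has a two-sided inverse. -/

import Mathlib

/-- An (algebraic) local groupoid over a base `M`: a set of arrows `G` with source,
target, unit, a partially defined multiplication (with domain `D`) satisfying the
unit laws and 3-associativity wherever defined. -/
structure LocalGroupoid (G : Type*) (M : Type*) where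
  s : G → M
  t : G → M
  unit : M → G
  s_unit : ∀ x, s (unit x) = x
  t_unit : ∀ x, t (unit x) = x
  /-- the domain of the multiplication -/
  D : G → G → Prop
  D_st : ∀ {g h}, D g h → s g = t h
  mul : G → G → G
  D_unit_right : ∀ g, D g (unit (s g))
  D_unit_left : ∀ g, D (unit (t g)) g
  s_mul : ∀ {g h}, D g h → s (mul g h) = s h
  t_mul : ∀ {g h}, D g h → t (mul g h) = t g
  mul_unit_right : ∀ g, mul g (unit (s g)) = g
  unit_mul : ∀ g, mul (unit (t g)) g = g
  assoc3 : ∀ {g h k}, D g h → D (mul g h) k → D h k → D g (mul h k) →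
    mul (mul g h) k = mul g (mul h k)

namespace LocalGroupoid

variable {G : Type*} {M : Type*} (L : LocalGroupoid G M)

/-- A well-formed word: a nonempty list `(w₁, …, wₙ)` of arrows with
`s wᵢ = t wᵢ₊₁`. -/
def WFWord (w : List G) : Prop := w ≠ [] ∧ w.Chain' (fun a b => L.s a = L.t b)

/-- An elementary contraction of words: replace an adjacent pair whose product is
defined by the product. -/
inductive Contr : List G → List G → Prop
  | mk (p q : List G) {g h : G} (hD : L.D g h) :
      Contr (p ++ g :: h :: q) (p ++ L.mul g h :: q)

/-- The equivalence relation on words generated by contractions and expansions. -/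
def WordEquiv : List G → List G → Prop := Relation.EqvGen L.Contr

/-- `ContractsTo w v`: `v` is obtained from `w` by a finite sequence of contractions
(equivalently, `w` is obtained from `v` by expansions, i.e. `v ≤ w`). -/
def ContractsTo : List G → List G → Prop := Relation.ReflTransGen L.Contr

/-- The type of well-formed words. -/
def Word := {w : List G // L.WFWord w}

instance wordSetoid : Setoid L.Word :=
  ⟨fun a b => L.WordEquiv a.1 b.1, by
    constructor
    · exact fun a => Relation.EqvGen.refl _
    · exact fun h => Relation.EqvGen.symm _ _ h
    · exact fun h1 h2 => Relation.EqvGen.trans _ _ _ h1 h2⟩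

/-- The associative completion of a local groupoid: well-formed words modulo
contractions and expansions. -/
def AC := Quotient L.wordSetoid

/-- The one-letter word `(g)`. -/
def singletonWord (g : G) : L.Word := ⟨[g], ⟨by simp, List.IsChain.singleton _⟩⟩

/-- The completion map `G → AC(G)`. -/
def completion (g : G) : L.AC := Quotient.mk _ (L.singletonWord g)

/-- Target of a well-formed word: the target of its first letter. -/
def wordTgt (w : L.Word) : M := L.t (w.1.head w.2.1)

/-- Source of a well-formed word: the source of its last letter. -/
def wordSrc (w : L.Word) : M := L.s (w.1.getLast w.2.1)

/-- `b` is a two-sided inverse of `a`. -/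
def InvPair (a b : G) : Prop :=
  L.D a b ∧ L.D b a ∧ L.mul a b = L.unit (L.t a) ∧ L.mul b a = L.unit (L.s a)

/-- An arrow is invertible if it has a two-sided inverse. -/
def Invertible (a : G) : Prop := ∃ b, L.InvPair a b

/-- `LProd as seed r`: `r = a₁ (a₂ (⋯ (aₖ seed)))` where `as = [a₁, …, aₖ]`, all
products being defined. -/
inductive LProd : List G → G → G → Prop
  | nil (g : G) : LProd [] g g
  | cons {as : List G} {g p : G} (a : G) : LProd as g p → L.D a p → LProd (a :: as) g (L.mul a p)

/-- `RProd seed bs r`: `r = ((⋯((seed b₁) b₂)⋯) bₖ)` where `bs = [b₁, …, bₖ]`, all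
products being defined. -/
inductive RProd : G → List G → G → Prop
  | nil (g : G) : RProd g [] g
  | cons {bs : List G} {g r : G} (b : G) (hD : L.D g b) : RProd (L.mul g b) bs r → RProd g (b :: bs) r

/-- The inverse-decomposition property: every composable pair `(g,h)` decomposes
through invertible elements, either on the left:
`g = aₗ(⋯(a₂ a₁))` and `h = a₁⁻¹(⋯(aₗ⁻¹ (gh)))`, or on the right:
`h = ((b₁ b₂)⋯)bₘ` and `g = (((gh) bₘ⁻¹)⋯) b₁⁻¹`. -/
def InvDecomp : Prop :=
  ∀ g h, L.D g h →
    (∃ a : List (G × G), (∀ p ∈ a, L.InvPair p.1 p.2) ∧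
        L.LProd (a.map Prod.fst).reverse (L.unit (L.s g)) g ∧
        L.LProd (a.map Prod.snd) (L.mul g h) h) ∨
    (∃ b : List (G × G), (∀ p ∈ b, L.InvPair p.1 p.2) ∧
        L.RProd (L.unit (L.t h)) (b.map Prod.fst) h ∧
        L.RProd (L.mul g h) (b.map Prod.snd).reverse g)

/-- An associator at `x`: an arrow `g` with `s g = t g = x` such that some
well-formed word can be contracted both to `(g)` and to `(u x)`. -/
def IsAssociator (x : M) (g : G) : Prop :=
  L.s g = x ∧ L.t g = x ∧
    ∃ w, L.WFWord w ∧ L.ContractsTo w [g] ∧ L.ContractsTo w [L.unit x]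

/-- An arrow is inversional if it is a well-defined product of invertible elements. -/
def Inversional (g : G) : Prop :=
  ∃ w : List G, L.WFWord w ∧ (∀ a ∈ w, L.Invertible a) ∧ L.ContractsTo w [g]

/-- `EvalsTo w g`: some full bracketing of the word `w` can be evaluated (all
intermediate products being defined), with result `g`. -/
inductive EvalsTo : List G → G → Prop
  | single (g : G) : EvalsTo [g] g
  | mul {w1 w2 : List G} {g h : G} : EvalsTo w1 g → EvalsTo w2 h → L.D g h →
      EvalsTo (w1 ++ w2) (L.mul g h)

/-- Global associativity: all defined bracketings of a composable tuple agree. -/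
def GloballyAssociative : Prop := ∀ w g h, L.EvalsTo w g → L.EvalsTo w h → g = h

end LocalGroupoid

/-- A morphism of local groupoids. -/
structure IsMorphism {G₁ M₁ G₂ M₂ : Type*} (L₁ : LocalGroupoid G₁ M₁)
    (L₂ : LocalGroupoid G₂ M₂) (F : G₁ → G₂) (f : M₁ → M₂) : Prop where
  map_s : ∀ g, L₂.s (F g) = f (L₁.s g)
  map_t : ∀ g, L₂.t (F g) = f (L₁.t g)
  map_unit : ∀ x, F (L₁.unit x) = L₂.unit (f x)
  map_D : ∀ {g h}, L₁.D g h → L₂.D (F g) (F h)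
  map_mul : ∀ {g h}, L₁.D g h → F (L₁.mul g h) = L₂.mul (F g) (F h)

/-- A local groupoid is global (an honest groupoid) if multiplication is defined for
all matching pairs and every arrow is invertible. -/
structure IsGlobal {G M : Type*} (L : LocalGroupoid G M) : Prop where
  total : ∀ {g h}, L.s g = L.t h → L.D g h
  inv : ∀ g, L.Invertible g

namespace LocalGroupoid

section Aux

variable {G : Type*} {M : Type*} (L : LocalGroupoid G M)

/-- A word `w` forming a chain from target `x` (of its head) to source `y` (of its last). -/
inductive Seg : M → List G → M → Prop
  | single (g : G) : Seg (L.t g) [g] (L.s g)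
  | cons (g : G) {w : List G} {y : M} : Seg (L.s g) w y → Seg (L.t g) (g :: w) y

variable {L}

lemma Seg.append {x y z : M} {w v : List G} (h1 : L.Seg x w y) (h2 : L.Seg y v z) :
    L.Seg x (w ++ v) z := by
  induction h1 with
  | single g => exact Seg.cons g h2
  | cons g h ih => exact Seg.cons g (ih h2)

lemma Seg.ne_nil {x y : M} {w : List G} (h : L.Seg x w y) : w ≠ [] := by
  cases h <;> simp

lemma Seg.head_eq {x y : M} {w : List G} (h : L.Seg x w y) (hne : w ≠ []) :
    x = L.t (w.head hne) := by
  induction h with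
  | single g => rfl
  | cons g h ih => rfl

lemma Seg.getLast_eq {x y : M} {w : List G} (h : L.Seg x w y) (hne : w ≠ []) :
    y = L.s (w.getLast hne) := by
  induction h with
  | single g => rfl
  | cons g h ih =>
    rw [List.getLast_cons h.ne_nil]
    exact ih h.ne_nil

lemma Seg.wf {x y : M} {w : List G} (h : L.Seg x w y) : L.WFWord w := by
  induction h with
  | single g => exact ⟨by simp, List.IsChain.singleton _⟩
  | cons g h ih =>
    refine ⟨by simp, List.isChain_cons.2 ⟨?_, ih.2⟩⟩
    intro b hb
    have hne := h.ne_nil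
    rw [List.head?_eq_head hne] at hb
    have hb' : _ = b := Option.some.inj hb
    rw [← hb']
    exact (h.head_eq hne)

lemma wf_seg {w : List G} (hw : L.WFWord w) :
    L.Seg (L.t (w.head hw.1)) w (L.s (w.getLast hw.1)) := by
  obtain ⟨hne, hch⟩ := hw
  induction w with
  | nil => exact absurd rfl hne
  | cons g w ih =>
    cases w with
    | nil => exact Seg.single g
    | cons a w' =>
      replace hch := List.isChain_cons_cons.1 hch
      have hseg := ih (by simp) hch.2
      simp only [List.head_cons] at hseg ⊢
      rw [List.getLast_cons (by simp)]
      have : L.t g = L.t g := rfl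
      have h1 : L.s g = L.t a := hch.1
      exact Seg.cons g (by rw [h1]; simpa using hseg)

lemma Seg.cons_elim {x y : M} {g : G} {w : List G} (h : L.Seg x (g :: w) y) :
    x = L.t g ∧ ((w = [] ∧ y = L.s g) ∨ L.Seg (L.s g) w y) := by
  cases h with
  | single _ => exact ⟨rfl, .inl ⟨rfl, rfl⟩⟩
  | cons _ h => exact ⟨rfl, .inr h⟩

lemma seg_contr {x y : M} : ∀ {w w' : List G}, L.Contr w w' → L.Seg x w y → L.Seg x w' y := by
  intro w w' hc
  cases hc with
  | mk p q hD =>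
    rename_i g h
    induction p generalizing x with
    | nil =>
      intro hseg
      simp only [List.nil_append] at hseg ⊢
      obtain ⟨hx, hr⟩ := hseg.cons_elim
      rcases hr with ⟨habs, -⟩ | hr
      · exact absurd habs (by simp)
      obtain ⟨hsg, hr2⟩ := hr.cons_elim
      subst hx
      rcases hr2 with ⟨rfl, hy⟩ | hq
      · have := Seg.single (L := L) (L.mul g h)
        rwa [L.t_mul hD, L.s_mul hD, ← hy] at this
      · have := Seg.cons (L := L) (L.mul g h) (by rwa [L.s_mul hD])
        rwa [L.t_mul hD] at this
    | cons a p ih =>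
      intro hseg
      simp only [List.cons_append] at hseg ⊢
      obtain ⟨hx, hr⟩ := hseg.cons_elim
      rcases hr with ⟨habs, -⟩ | hr
      · exact absurd habs (by simp)
      subst hx
      exact Seg.cons a (ih hr)

lemma seg_contractsTo {x y : M} {w w' : List G} (hc : L.ContractsTo w w')
    (hseg : L.Seg x w y) : L.Seg x w' y := by
  induction hc with
  | refl => exact hseg
  | tail _ hstep ih => exact seg_contr hstep ih

lemma contr_context {u u' : List G} (h : L.Contr u u') (p q : List G) :
    L.Contr (p ++ u ++ q) (p ++ u' ++ q) := by
  cases h with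
  | mk p' q' hD =>
    have := Contr.mk (L := L) (p ++ p') (q' ++ q) hD
    simpa [List.append_assoc] using this

lemma contractsTo_context {u u' : List G} (h : L.ContractsTo u u') (p q : List G) :
    L.ContractsTo (p ++ u ++ q) (p ++ u' ++ q) := by
  induction h with
  | refl => exact .refl
  | tail _ hstep ih => exact .tail ih (contr_context hstep p q)

lemma ContractsTo.wordEquiv {u u' : List G} (h : L.ContractsTo u u') : L.WordEquiv u u' := by
  induction h with
  | refl => exact .refl _
  | tail _ hstep ih => exact .trans _ _ _ ih (.rel _ _ hstep)

end Aux

/-- A choice of inverse for each invertible element. -/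
noncomputable def ninv {G : Type*} {M : Type*} (L : LocalGroupoid G M) (a : G) : G :=
  open Classical in if h : L.Invertible a then h.choose else a

section Aux2

variable {G : Type*} {M : Type*} {L : LocalGroupoid G M}

lemma invPair_ninv {a : G} (h : L.Invertible a) : L.InvPair a (L.ninv a) := by
  classical
  rw [ninv]
  rw [dif_pos h]
  exact h.choose_spec

/-- `w · w⁻¹` contracts to the unit at the target of `w`. -/
lemma cancel_right {x y : M} : ∀ {w : List G}, (∀ a ∈ w, L.Invertible a) →
    L.Seg x w y → L.ContractsTo (w ++ (w.map L.ninv).reverse) [L.unit x] := by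
  intro w hI hseg
  induction hseg with
  | single g =>
    obtain ⟨hD, hD', hmul, hmul'⟩ := invPair_ninv (hI g (by simp))
    have step : L.Contr ([] ++ g :: L.ninv g :: []) ([] ++ L.mul g (L.ninv g) :: []) :=
      Contr.mk [] [] hD
    simpa [hmul, ContractsTo] using Relation.ReflTransGen.single step
  | @cons g w' y hseg ih =>
    have hI' : ∀ a ∈ w', L.Invertible a := fun a ha => hI a (by simp [ha])
    have ihc := ih hI'
    obtain ⟨hD, hD', hmul, hmul'⟩ := invPair_ninv (hI g (by simp))
    -- word is g :: (w' ++ rev') ++ [ninv g]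
    have c1 : L.ContractsTo ([g] ++ (w' ++ (w'.map L.ninv).reverse) ++ [L.ninv g])
        ([g] ++ [L.unit (L.s g)] ++ [L.ninv g]) := contractsTo_context ihc [g] [L.ninv g]
    have hDu : L.D g (L.unit (L.s g)) := L.D_unit_right g
    have step2 : L.Contr ([] ++ g :: L.unit (L.s g) :: [L.ninv g])
        ([] ++ L.mul g (L.unit (L.s g)) :: [L.ninv g]) := Contr.mk [] [L.ninv g] hDu
    have step3 : L.Contr ([] ++ g :: L.ninv g :: []) ([] ++ L.mul g (L.ninv g) :: []) :=
      Contr.mk [] [] hD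
    have c2 : L.ContractsTo ([g] ++ [L.unit (L.s g)] ++ [L.ninv g]) [L.unit (L.t g)] := by
      have s2 : L.Contr [g, L.unit (L.s g), L.ninv g] [g, L.ninv g] := by
        simpa [L.mul_unit_right] using step2
      have s3 : L.Contr [g, L.ninv g] [L.unit (L.t g)] := by
        simpa [hmul] using step3
      simpa [ContractsTo] using (Relation.ReflTransGen.single s2).trans (Relation.ReflTransGen.single s3)
    have := Relation.ReflTransGen.trans c1 c2
    simpa [List.append_assoc, ContractsTo] using this

/-- `w⁻¹ · w` contracts to the unit at the source of `w`. -/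
lemma cancel_left {x y : M} : ∀ {w : List G}, (∀ a ∈ w, L.Invertible a) →
    L.Seg x w y → L.ContractsTo ((w.map L.ninv).reverse ++ w) [L.unit y] := by
  intro w hI hseg
  induction hseg with
  | single g =>
    obtain ⟨hD, hD', hmul, hmul'⟩ := invPair_ninv (hI g (by simp))
    have step : L.Contr ([] ++ L.ninv g :: g :: []) ([] ++ L.mul (L.ninv g) g :: []) :=
      Contr.mk [] [] hD'
    simpa [hmul', ContractsTo] using Relation.ReflTransGen.single step
  | @cons g w' y hseg ih =>
    have hI' : ∀ a ∈ w', L.Invertible a := fun a ha => hI a (by simp [ha])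
    have ihc := ih hI'
    obtain ⟨hD, hD', hmul, hmul'⟩ := invPair_ninv (hI g (by simp))
    -- word is rev' ++ ninv g :: g :: w'
    have hne := hseg.ne_nil
    have hhead : L.s g = L.t (w'.head hne) := hseg.head_eq hne
    have step1 : L.Contr ((w'.map L.ninv).reverse ++ L.ninv g :: g :: w')
        ((w'.map L.ninv).reverse ++ L.mul (L.ninv g) g :: w') :=
      Contr.mk _ _ hD'
    have hDu : L.D (L.unit (L.s g)) (w'.head hne) := by
      rw [hhead]; exact L.D_unit_left _
    have step2 : L.Contr ((w'.map L.ninv).reverse ++ L.unit (L.s g) :: (w'.head hne) :: w'.tail)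
        ((w'.map L.ninv).reverse ++ L.mul (L.unit (L.s g)) (w'.head hne) :: w'.tail) :=
      Contr.mk _ _ hDu
    have hw'eq : w'.head hne :: w'.tail = w' := List.cons_head_tail hne
    have hmulu : L.mul (L.unit (L.s g)) (w'.head hne) = w'.head hne := by
      rw [hhead]; exact L.unit_mul _
    have c12 : L.ContractsTo ((w'.map L.ninv).reverse ++ L.ninv g :: g :: w')
        ((w'.map L.ninv).reverse ++ w') := by
      refine Relation.ReflTransGen.trans (Relation.ReflTransGen.single step1)
        (Relation.ReflTransGen.single ?_)
      rw [hmul']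
      convert step2 using 2
      · rw [hw'eq]
      · rw [hmulu, hw'eq]
    have := Relation.ReflTransGen.trans c12 ihc
    simpa [List.append_assoc, ContractsTo] using this

/-- The reversed, inverted word forms a chain in the opposite direction. -/
lemma seg_inv {x y : M} : ∀ {w : List G}, (∀ a ∈ w, L.Invertible a) →
    L.Seg x w y → L.Seg y ((w.map L.ninv).reverse) x := by
  intro w hI hseg
  induction hseg with
  | single g =>
    obtain ⟨hD, hD', hmul, hmul'⟩ := invPair_ninv (hI g (by simp))
    have h1 : L.t (L.ninv g) = L.s g := (L.D_st hD).symm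
    have h2 : L.s (L.ninv g) = L.t g := L.D_st hD'
    simpa [h1, h2] using Seg.single (L := L) (L.ninv g)
  | @cons g w' y hseg ih =>
    have hI' : ∀ a ∈ w', L.Invertible a := fun a ha => hI a (by simp [ha])
    obtain ⟨hD, hD', hmul, hmul'⟩ := invPair_ninv (hI g (by simp))
    have h1 : L.t (L.ninv g) = L.s g := (L.D_st hD).symm
    have h2 : L.s (L.ninv g) = L.t g := L.D_st hD'
    have hsing : L.Seg (L.s g) [L.ninv g] (L.t g) := by
      simpa [h1, h2] using Seg.single (L := L) (L.ninv g)
    simpa using Seg.append (ih hI') hsing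

/-- Expand a word into an equivalent word of invertible letters. -/
lemma exists_inv_word (hinv : ∀ g : G, L.Inversional g) {x y : M} :
    ∀ {w : List G}, L.Seg x w y →
      ∃ W : List G, (∀ a ∈ W, L.Invertible a) ∧ L.Seg x W y ∧ L.ContractsTo W w := by
  have single : ∀ g : G, ∃ W : List G, (∀ a ∈ W, L.Invertible a) ∧
      L.Seg (L.t g) W (L.s g) ∧ L.ContractsTo W [g] := by
    intro g
    obtain ⟨W, hwf, hIs, hcon⟩ := hinv g
    refine ⟨W, hIs, ?_, hcon⟩
    have hs := wf_seg hwf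
    have hs' := seg_contractsTo hcon hs
    have hx : L.t (W.head hwf.1) = L.t g := by simpa using hs'.head_eq (by simp)
    have hy : L.s (W.getLast hwf.1) = L.s g := by simpa using hs'.getLast_eq (by simp)
    rwa [hx, hy] at hs
  intro w hseg
  induction hseg with
  | single g => exact single g
  | @cons g w' y hseg ih =>
    obtain ⟨W', hI', hseg', hcon'⟩ := ih
    obtain ⟨Wg, hIg, hsegg, hcong⟩ := single g
    refine ⟨Wg ++ W', ?_, Seg.append hsegg hseg', ?_⟩
    · intro a ha
      rcases List.mem_append.1 ha with h | h
      · exact hIg a h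
      · exact hI' a h
    · have c1 : L.ContractsTo (Wg ++ W') (Wg ++ w') := by
        simpa using contractsTo_context hcon' Wg []
      have c2 : L.ContractsTo (Wg ++ w') (g :: w') := by
        simpa using contractsTo_context hcong [] w'
      exact Relation.ReflTransGen.trans c1 c2

end Aux2

end LocalGroupoid

/-- If `G` is an inversional local groupoid, then its associative
completion `AC(G)` (well-formed words modulo contractions/expansions, with
multiplication given by concatenation, source/target `s[w₁,…,wₙ] = s wₙ`,
`t[w₁,…,wₙ] = t w₁`, and units the classes `[u x]`) is a groupoid: every class
`[w]` has a two-sided inverse `[v]`, i.e. the concatenations `w ++ v` and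
`v ++ w` are well-formed and equivalent to the unit words at `t(w)` resp. `s(w)`. -/
theorem AC_is_groupoid {G M : Type*} (L : LocalGroupoid G M)
    (hinv : ∀ g : G, L.Inversional g) :
    ∀ (w : List G) (hw : L.WFWord w), ∃ (v : List G) (hv : L.WFWord v),
      L.s (w.getLast hw.1) = L.t (v.head hv.1) ∧
      L.s (v.getLast hv.1) = L.t (w.head hw.1) ∧
      L.WordEquiv (w ++ v) [L.unit (L.t (w.head hw.1))] ∧
      L.WordEquiv (v ++ w) [L.unit (L.t (v.head hv.1))] := by
  intro w hw
  classical
  have hs := LocalGroupoid.wf_seg hw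
  set x := L.t (w.head hw.1) with hx
  set y := L.s (w.getLast hw.1) with hy
  obtain ⟨W, hWI, hWseg, hWcon⟩ := LocalGroupoid.exists_inv_word hinv hs
  set v : List G := (W.map L.ninv).reverse with hvdef
  have hvseg : L.Seg y v x := LocalGroupoid.seg_inv hWI hWseg
  have hv : L.WFWord v := hvseg.wf
  refine ⟨v, hv, ?_, ?_, ?_, ?_⟩
  · exact (hvseg.head_eq hv.1).symm ▸ rfl
  · exact (hvseg.getLast_eq hv.1).symm
  · have c1 : L.ContractsTo (W ++ v) (w ++ v) := by
      simpa using LocalGroupoid.contractsTo_context hWcon [] v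
    have c2 : L.ContractsTo (W ++ v) [L.unit x] :=
      LocalGroupoid.cancel_right hWI hWseg
    exact Relation.EqvGen.trans _ _ _
      (Relation.EqvGen.symm _ _ c1.wordEquiv) c2.wordEquiv
  · have c1 : L.ContractsTo (v ++ W) (v ++ w) := by
      simpa using LocalGroupoid.contractsTo_context hWcon v []
    have c2 : L.ContractsTo (v ++ W) [L.unit y] :=
      LocalGroupoid.cancel_left hWI hWseg
    have hty : L.t (v.head hv.1) = y := (hvseg.head_eq hv.1).symm
    rw [hty]
    exact Relation.EqvGen.trans _ _ _
      (Relation.EqvGen.symm _ _ c1.wordEquiv) c2.wordEquiv
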